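/- Let N ≥ 1 and I = {0,1,…,N}, let P be an irreducible stochastic matrix on I that is monotone, i.e. for every y ∈ I and every x < N one has Σ_{z≤y} P(x+1,z) ≤ Σ_{z≤y} P(x,z). Define the Siegmund dual P̂ by P̂(y,x) := Σ_{z≤y} P(x,z) − Σ_{z≤y} P(x+1,z) for x < N, and P̂(y,N) := Σ_{z≤y} P(N,z). Then: (a) H_S·P̂ᵀ = P·H_S, where H_S(x,y) = 1 if x ≤ y and 0 otherwise; (b) P̂ is entrywise nonnegative; (c) for every y, Σ_{x∈I} P̂(y,x) = Σ_{z≤y} P(0,z) ≤ 1, and Σ_{x∈I} P̂(0,x) = P(0,0) < 1, so P̂ is strictly substochastic and loses mass exactly through state 0; (d) N is an absorbing state of P̂, and it is the unique absorbing state of P̂. -/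

import Mathlib

open Matrix Finset

noncomputable def siegmundDual (N : ℕ) (P : Matrix (Fin (N+1)) (Fin (N+1)) ℝ) :
    Matrix (Fin (N+1)) (Fin (N+1)) ℝ :=
  Matrix.of fun y x =>
    if (x : ℕ) < N then
      (∑ z ∈ Finset.Iic y, P x z) - ∑ z ∈ Finset.Iic y, P (x + 1) z
    else ∑ z ∈ Finset.Iic y, P x z

lemma tele (H : ℕ → ℝ) (a b : ℕ) (hab : a ≤ b) :
    ∑ n ∈ Finset.Ico a b, (H n - H (n+1)) = H a - H b := by
  rw [Finset.sum_Ico_eq_sum_range]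
  have := Finset.sum_range_sub' (fun i => H (a + i)) (b - a)
  simpa [Nat.add_sub_cancel' hab, Nat.add_assoc] using this

lemma sum_Ici_siegmundDual (N : ℕ) (P : Matrix (Fin (N+1)) (Fin (N+1)) ℝ)
    (y x : Fin (N+1)) :
    ∑ w ∈ Finset.Ici x, siegmundDual N P y w = ∑ z ∈ Finset.Iic y, P x z := by
  classical
  set F : ℕ → ℝ := fun n => if h : n < N + 1 then ∑ z ∈ Finset.Iic y, P ⟨n, h⟩ z else 0 with hF
  have key : ∑ w ∈ Finset.Ici x, siegmundDual N P y w = F x - F (N+1) := by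
    rw [← tele F x (N+1) (Nat.le_of_lt_succ x.isLt |>.trans (Nat.le_succ N))]
    refine Finset.sum_bij' (fun w _ => (w : ℕ))
      (fun n hn => (⟨n, (Finset.mem_Ico.mp hn).2⟩ : Fin (N+1))) ?_ ?_ ?_ ?_ ?_
    · intro w hw
      simp only [Finset.mem_Ici] at hw
      exact Finset.mem_Ico.mpr ⟨hw, w.isLt⟩
    · intro n hn
      simp only [Finset.mem_Ici]
      exact (Finset.mem_Ico.mp hn).1
    · intro w hw; exact Fin.ext rfl
    · intro n hn; rfl
    · intro w hw
      simp only [Finset.mem_Ici] at hw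
      have h1 : F (w : ℕ) = ∑ z ∈ Finset.Iic y, P w z := by
        simp [hF, w.isLt, w.is_le]
      by_cases hwN : (w : ℕ) < N
      · have h2 : F ((w : ℕ) + 1) = ∑ z ∈ Finset.Iic y, P (w + 1) z := by
          have hlt : (w : ℕ) + 1 < N + 1 := by omega
          have : (⟨(w : ℕ) + 1, hlt⟩ : Fin (N+1)) = w + 1 := by
            apply Fin.ext
            simp [Fin.add_def, Nat.mod_eq_of_lt hlt]
          simp [hF, hlt, this, not_le.mpr hwN]
        simp [siegmundDual, hwN, h1, h2]
      · have hw' : (w : ℕ) = N := by omega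
        have h2 : F ((w : ℕ) + 1) = 0 := by simp [hF, hw']
        simp [siegmundDual, hwN, h1, h2]
  have : F (x : ℕ) = ∑ z ∈ Finset.Iic y, P x z := by simp [hF, x.isLt, x.is_le]
  simp [key, this, hF, x.is_le]

theorem stmt9 (N : ℕ) (hN : 1 ≤ N) (P : Matrix (Fin (N+1)) (Fin (N+1)) ℝ)
    (hP0 : ∀ x y, 0 ≤ P x y) (hP1 : ∀ x, ∑ y, P x y = 1)
    (hirr : ∀ x y, ∃ n ≥ 1, 0 < (P ^ n) x y)
    (hmono : ∀ y x : Fin (N+1), (x : ℕ) < N →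
      ∑ z ∈ Finset.Iic y, P (x + 1) z ≤ ∑ z ∈ Finset.Iic y, P x z) :
    let HS : Matrix (Fin (N+1)) (Fin (N+1)) ℝ :=
      Matrix.of fun x y => if x ≤ y then 1 else 0
    let Phat := siegmundDual N P
    HS * Phatᵀ = P * HS ∧
    (∀ y x, 0 ≤ Phat y x) ∧
    (∀ y, ∑ x, Phat y x = ∑ z ∈ Finset.Iic y, P 0 z ∧
      ∑ z ∈ Finset.Iic y, P 0 z ≤ 1) ∧
    (∑ x, Phat 0 x = P 0 0 ∧ P 0 0 < 1) ∧
    (∀ y, Phat (Fin.last N) y = if y = Fin.last N then 1 else 0) ∧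
    (∀ a, (∀ y, Phat a y = if y = a then 1 else 0) → a = Fin.last N) := by
  classical
  intro HS Phat
  -- universal facts
  have hIic_le_one : ∀ (x y : Fin (N+1)), ∑ z ∈ Finset.Iic y, P x z ≤ 1 := by
    intro x y
    rw [← hP1 x]
    exact Finset.sum_le_sum_of_subset_of_nonneg (Finset.subset_univ _)
      (fun z _ _ => hP0 x z)
  have hIci0 : (Finset.Ici (0 : Fin (N+1))) = Finset.univ := by
    ext w; simp [Fin.zero_le]
  have hrowsum : ∀ y : Fin (N+1), ∑ x, Phat y x = ∑ z ∈ Finset.Iic y, P 0 z := by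
    intro y
    rw [← hIci0]
    exact sum_Ici_siegmundDual N P y 0
  refine ⟨?_, ?_, ?_, ?_, ?_, ?_⟩
  · -- (a)
    ext x y
    have hL : (HS * Phatᵀ) x y = ∑ w ∈ Finset.Ici x, Phat y w := by
      rw [Matrix.mul_apply]
      rw [← Finset.sum_filter_of_ne (p := fun w => x ≤ w)]
      · rw [show Finset.univ.filter (fun w => x ≤ w) = Finset.Ici x from by ext w; simp]
        apply Finset.sum_congr rfl
        intro w hw
        simp only [Finset.mem_Ici] at hw
        simp [HS, transpose_apply, hw]
      · intro w _ hne
        by_contra hxw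
        simp [HS, transpose_apply, hxw] at hne
    have hR : (P * HS) x y = ∑ z ∈ Finset.Iic y, P x z := by
      rw [Matrix.mul_apply]
      rw [← Finset.sum_filter_of_ne (p := fun w => w ≤ y)]
      · rw [show Finset.univ.filter (fun w => w ≤ y) = Finset.Iic y from by ext w; simp]
        apply Finset.sum_congr rfl
        intro w hw
        simp only [Finset.mem_Iic] at hw
        simp [HS, hw]
      · intro w _ hne
        by_contra hwy
        simp [HS, hwy] at hne
    rw [hL, hR, sum_Ici_siegmundDual]
  · -- (b)
    intro y x
    simp only [Phat, siegmundDual, Matrix.of_apply]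
    split
    · next h => exact sub_nonneg.mpr (hmono y x h)
    · exact Finset.sum_nonneg fun z _ => hP0 x z
  · -- (c1)
    intro y
    exact ⟨hrowsum y, hIic_le_one 0 y⟩
  · -- (c2)
    constructor
    · rw [hrowsum 0]
      rw [show (Finset.Iic (0 : Fin (N+1))) = {0} from by ext w; simp [Fin.le_zero_iff]]
      exact Finset.sum_singleton _ _
    · by_contra h
      push_neg at h
      have hle : P 0 0 ≤ 1 := by
        rw [← hP1 0]
        exact Finset.single_le_sum (fun z _ => hP0 0 z) (Finset.mem_univ 0)
      have heq : P 0 0 = 1 := le_antisymm hle h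
      have hzero : ∀ z : Fin (N+1), z ≠ 0 → P 0 z = 0 := by
        have hsum : ∑ z ∈ Finset.univ.erase 0, P 0 z = 0 := by
          have := hP1 0
          rw [← Finset.add_sum_erase _ _ (Finset.mem_univ 0)] at this
          linarith
        intro z hz
        have := (Finset.sum_eq_zero_iff_of_nonneg (fun w _ => hP0 0 w)).mp hsum
        exact this z (Finset.mem_erase.mpr ⟨hz, Finset.mem_univ z⟩)
      have hpow : ∀ n : ℕ, ∀ z : Fin (N+1), z ≠ 0 → (P ^ n) 0 z = 0 := by
        intro n
        induction n with
        | zero => intro z hz; simp [Matrix.one_apply, (Ne.symm hz)]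
        | succ n ih =>
          intro z hz
          rw [pow_succ, Matrix.mul_apply]
          apply Finset.sum_eq_zero
          intro w _
          by_cases hw : w = 0
          · subst hw; rw [hzero z hz]; ring
          · rw [ih w hw]; ring
      obtain ⟨n, hn1, hnpos⟩ := hirr 0 (Fin.last N)
      have hlast : (Fin.last N) ≠ 0 := by
        intro hcontra
        have := congrArg Fin.val hcontra
        simp at this
        omega
      rw [hpow n _ hlast] at hnpos
      exact lt_irrefl 0 hnpos
  · -- (d1)
    intro x
    have hIic_last : Finset.Iic (Fin.last N) = Finset.univ := by
      ext w; simp [Fin.le_last]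
    by_cases hx : (x : ℕ) < N
    · have hxne : x ≠ Fin.last N := by
        intro h; rw [h] at hx; simp [Fin.last] at hx
      have h1 : ∑ z ∈ Finset.Iic (Fin.last N), P x z = 1 := by
        rw [hIic_last]; exact hP1 x
      have h2 : ∑ z ∈ Finset.Iic (Fin.last N), P (x+1) z = 1 := by
        rw [hIic_last]; exact hP1 (x+1)
      simp [Phat, siegmundDual, hx, h1, h2, hxne]
    · have hxeq : x = Fin.last N := by
        apply Fin.ext
        simp [Fin.last]
        omega
      have h1 : ∑ z ∈ Finset.Iic (Fin.last N), P x z = 1 := by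
        rw [hIic_last]; exact hP1 x
      subst hxeq
      simp [Phat, siegmundDual, hx, h1]
  · -- (d2) uniqueness
    intro a ha
    by_contra hne
    have haN : (a : ℕ) < N := by
      have h1 := a.isLt
      have h2 : (a : ℕ) ≠ N := fun h => hne (Fin.ext (by simpa [Fin.last] using h))
      omega
    -- partial sums
    have hFxa : ∀ x : Fin (N+1), ∑ z ∈ Finset.Iic a, P x z
        = if a ∈ Finset.Ici x then 1 else 0 := by
      intro x
      rw [← sum_Ici_siegmundDual N P a x]
      rw [Finset.sum_congr rfl (fun w _ => ha w)]
      exact Finset.sum_ite_eq' (Finset.Ici x) a (fun _ => 1)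
    have hblock1 : ∀ x z : Fin (N+1), a < x → z ≤ a → P x z = 0 := by
      intro x z hax hza
      have h0 : ∑ z ∈ Finset.Iic a, P x z = 0 := by
        rw [hFxa x]
        simp [Finset.mem_Ici, not_le.mpr hax]
      exact (Finset.sum_eq_zero_iff_of_nonneg (fun w _ => hP0 x w)).mp h0 z
        (Finset.mem_Iic.mpr hza)
    have hblock2 : ∀ x z : Fin (N+1), x ≤ a → a < z → P x z = 0 := by
      intro x z hxa haz
      have h1 : ∑ z ∈ Finset.Iic a, P x z = 1 := by
        rw [hFxa x]
        simp [Finset.mem_Ici, hxa]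
      have hrest : ∑ z ∈ Finset.univ \ Finset.Iic a, P x z = 0 := by
        have := hP1 x
        rw [← Finset.sum_sdiff (Finset.subset_univ (Finset.Iic a))] at this
        linarith
      exact (Finset.sum_eq_zero_iff_of_nonneg (fun w _ => hP0 x w)).mp hrest z
        (Finset.mem_sdiff.mpr ⟨Finset.mem_univ z, by simp [not_le.mpr haz]⟩)
    have hpow : ∀ n : ℕ, ∀ x z : Fin (N+1), x ≤ a → a < z → (P ^ n) x z = 0 := by
      intro n
      induction n with
      | zero =>
        intro x z hxa haz
        have : x ≠ z := fun h => absurd (h ▸ hxa) (not_le.mpr haz)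
        simp [Matrix.one_apply, this]
      | succ n ih =>
        intro x z hxa haz
        rw [pow_succ, Matrix.mul_apply]
        apply Finset.sum_eq_zero
        intro w _
        by_cases hw : w ≤ a
        · rw [hblock2 w z hw haz]; ring
        · rw [ih x w hxa (not_le.mp hw)]; ring
    obtain ⟨n, hn1, hnpos⟩ := hirr 0 (Fin.last N)
    have h0a : (0 : Fin (N+1)) ≤ a := Fin.zero_le a
    have halast : a < Fin.last N := lt_of_le_of_ne (Fin.le_last a) hne
    rw [hpow n 0 (Fin.last N) h0a halast] at hnpos
    exact lt_irrefl 0 hnpos
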